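/- Let $\ell^0_1 \le \dots \le \ell^0_T$ be nonnegative reals, $L \ge 0$, and $t_0$ with $\Delta_{t_0} < L \le \Delta_{t_0+1}$ as in the water-filling setup. The profile $\ell^*$ defined by $\ell^*_t = (L + \sum_{s\le t_0}\ell^0_s)/t_0 - \ell^0_t$ for $t \le t_0$ and $\ell^*_t = 0$ otherwise is the unique minimizer of $\sum_{t=1}^T (\ell_t + \ell^0_t)^2$ over nonnegative profiles $(\ell_t)$ satisfying $\sum_t \ell_t = L$. -/

import Mathlib

/-- The water-filling profile is the unique minimizer of
`∑ t (ℓ t + ℓ0 t)^2` over nonnegative profiles summing to `L`. -/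
theorem waterfilling_profile_unique_minimizer
    (T : ℕ) (hT : 1 ≤ T) (ℓ0 : ℕ → ℝ)
    (hnonneg : ∀ t, 1 ≤ t → t ≤ T → 0 ≤ ℓ0 t)
    (hsorted : ∀ s t, 1 ≤ s → s ≤ t → t ≤ T → ℓ0 s ≤ ℓ0 t)
    (Δ : ℕ → ℝ)
    (hΔ : ∀ t, 1 ≤ t → t ≤ T →
      Δ t = t * ℓ0 t - ∑ s ∈ Finset.Icc 1 t, ℓ0 s)
    (L : ℝ) (hL : 0 ≤ L)
    (t0 : ℕ) (ht0a : 1 ≤ t0) (ht0b : t0 ≤ T)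
    (hlow : Δ t0 < L) (hhigh : t0 < T → L ≤ Δ (t0 + 1))
    (ℓstar : ℕ → ℝ)
    (hℓstar_used : ∀ t, 1 ≤ t → t ≤ t0 →
      ℓstar t = (L + ∑ s ∈ Finset.Icc 1 t0, ℓ0 s) / t0 - ℓ0 t)
    (hℓstar_unused : ∀ t, t0 < t → ℓstar t = 0) :
    (∀ ℓ : ℕ → ℝ, (∀ t, 1 ≤ t → t ≤ T → 0 ≤ ℓ t) →
        (∑ t ∈ Finset.Icc 1 T, ℓ t = L) →
        ∑ t ∈ Finset.Icc 1 T, (ℓstar t + ℓ0 t) ^ 2 ≤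
          ∑ t ∈ Finset.Icc 1 T, (ℓ t + ℓ0 t) ^ 2) ∧
    (∀ ℓ : ℕ → ℝ, (∀ t, 1 ≤ t → t ≤ T → 0 ≤ ℓ t) →
        (∑ t ∈ Finset.Icc 1 T, ℓ t = L) →
        (∑ t ∈ Finset.Icc 1 T, (ℓ t + ℓ0 t) ^ 2 =
          ∑ t ∈ Finset.Icc 1 T, (ℓstar t + ℓ0 t) ^ 2) →
        ∀ t, 1 ≤ t → t ≤ T → ℓ t = ℓstar t) := by
  classical
  set S : ℝ := ∑ s ∈ Finset.Icc 1 t0, ℓ0 s with hS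
  set w : ℝ := (L + S) / t0 with hw
  have ht0pos : (0:ℝ) < t0 := by exact_mod_cast Nat.pos_of_ne_zero (by omega)
  have hws : ∀ t ∈ Finset.Icc 1 t0, ℓstar t + ℓ0 t = w := by
    intro t ht
    simp only [Finset.mem_Icc] at ht
    rw [hℓstar_used t ht.1 ht.2]; ring
  have hsplit : ∀ f : ℕ → ℝ,
      ∑ t ∈ Finset.Icc 1 T, f t
        = ∑ t ∈ Finset.Icc 1 t0, f t + ∑ t ∈ Finset.Ioc t0 T, f t := by
    intro f
    have h1 : Finset.Icc 1 T = Finset.Ioc 0 T := by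
      rw [← Finset.Icc_add_one_left_eq_Ioc]; rfl
    have h2 : Finset.Icc 1 t0 = Finset.Ioc 0 t0 := by
      rw [← Finset.Icc_add_one_left_eq_Ioc]; rfl
    rw [h1, h2, ← Finset.sum_Ioc_consecutive f (Nat.zero_le t0) ht0b]
  have hcard : (Finset.Icc 1 t0).card = t0 := by
    rw [Nat.card_Icc]; omega
  have hsum_star : ∑ t ∈ Finset.Icc 1 t0, ℓstar t = L := by
    have : ∑ t ∈ Finset.Icc 1 t0, ℓstar t
        = ∑ t ∈ Finset.Icc 1 t0, (w - ℓ0 t) := by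
      apply Finset.sum_congr rfl
      intro t ht
      simp only [Finset.mem_Icc] at ht
      rw [hℓstar_used t ht.1 ht.2]
    rw [this, Finset.sum_sub_distrib, Finset.sum_const, hcard, ← hS, hw, nsmul_eq_mul]
    field_simp
    ring
  have hw_le : ∀ t ∈ Finset.Ioc t0 T, w ≤ ℓ0 t := by
    intro t ht
    simp only [Finset.mem_Ioc] at ht
    have ht0T : t0 < T := lt_of_lt_of_le ht.1 ht.2
    have hsucc : t0 + 1 ≤ T := ht0T
    have hΔ1 : Δ (t0+1) = (t0+1 : ℕ) * ℓ0 (t0+1) - ∑ s ∈ Finset.Icc 1 (t0+1), ℓ0 s :=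
      hΔ (t0+1) (by omega) hsucc
    have hsum1 : ∑ s ∈ Finset.Icc 1 (t0+1), ℓ0 s = S + ℓ0 (t0+1) := by
      rw [Finset.sum_Icc_succ_top (by omega : 1 ≤ t0 + 1)]
    have hL1 : L ≤ Δ (t0+1) := hhigh ht0T
    rw [hΔ1, hsum1] at hL1
    push_cast at hL1
    have key : L + S ≤ (t0 : ℝ) * ℓ0 (t0+1) := by nlinarith
    have hw1 : w ≤ ℓ0 (t0+1) := by
      rw [hw, div_le_iff₀ ht0pos]
      nlinarith
    exact le_trans hw1 (hsorted (t0+1) t (by omega) (by omega) ht.2)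
  -- key inequality
  have key : ∀ ℓ : ℕ → ℝ, (∀ t, 1 ≤ t → t ≤ T → 0 ≤ ℓ t) →
      (∑ t ∈ Finset.Icc 1 T, ℓ t = L) →
      ∑ t ∈ Finset.Icc 1 T, (ℓstar t + ℓ0 t) ^ 2
        + ∑ t ∈ Finset.Icc 1 T, (ℓ t - ℓstar t) ^ 2
        ≤ ∑ t ∈ Finset.Icc 1 T, (ℓ t + ℓ0 t) ^ 2 := by
    intro ℓ hpos hsum
    have expand : ∑ t ∈ Finset.Icc 1 T, (ℓ t + ℓ0 t) ^ 2
        = ∑ t ∈ Finset.Icc 1 T, (ℓstar t + ℓ0 t) ^ 2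
          + ∑ t ∈ Finset.Icc 1 T, (ℓ t - ℓstar t) ^ 2
          + 2 * ∑ t ∈ Finset.Icc 1 T, (ℓstar t + ℓ0 t) * (ℓ t - ℓstar t) := by
      rw [Finset.mul_sum, ← Finset.sum_add_distrib, ← Finset.sum_add_distrib]
      apply Finset.sum_congr rfl
      intro t _
      ring
    have hC : 0 ≤ ∑ t ∈ Finset.Icc 1 T, (ℓstar t + ℓ0 t) * (ℓ t - ℓstar t) := by
      rw [hsplit]
      have hA : ∑ t ∈ Finset.Icc 1 t0, (ℓstar t + ℓ0 t) * (ℓ t - ℓstar t)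
          = w * (∑ t ∈ Finset.Icc 1 t0, ℓ t - L) := by
        rw [Finset.sum_congr rfl (fun t ht => by rw [hws t ht]),
          ← Finset.mul_sum, Finset.sum_sub_distrib, hsum_star]
      have hB : ∑ t ∈ Finset.Ioc t0 T, (ℓstar t + ℓ0 t) * (ℓ t - ℓstar t)
          = ∑ t ∈ Finset.Ioc t0 T, ℓ0 t * ℓ t := by
        apply Finset.sum_congr rfl
        intro t ht
        simp only [Finset.mem_Ioc] at ht
        rw [hℓstar_unused t ht.1]
        ring
      have hP : ∑ t ∈ Finset.Icc 1 t0, ℓ t - L = - ∑ t ∈ Finset.Ioc t0 T, ℓ t := by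
        have := hsplit ℓ
        rw [hsum] at this
        linarith
      rw [hA, hB, hP]
      have : w * -∑ t ∈ Finset.Ioc t0 T, ℓ t + ∑ t ∈ Finset.Ioc t0 T, ℓ0 t * ℓ t
          = ∑ t ∈ Finset.Ioc t0 T, (ℓ0 t - w) * ℓ t := by
        rw [Finset.sum_congr rfl (fun t _ => by ring : ∀ t ∈ Finset.Ioc t0 T,
          (ℓ0 t - w) * ℓ t = ℓ0 t * ℓ t - w * ℓ t), Finset.sum_sub_distrib,
          ← Finset.mul_sum]
        ring
      rw [this]
      apply Finset.sum_nonneg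
      intro t ht
      have h1 := hw_le t ht
      simp only [Finset.mem_Ioc] at ht
      have h2 := hpos t (by omega) ht.2
      nlinarith
    linarith [expand]
  constructor
  · intro ℓ hpos hsum
    have h1 := key ℓ hpos hsum
    have h2 : 0 ≤ ∑ t ∈ Finset.Icc 1 T, (ℓ t - ℓstar t) ^ 2 :=
      Finset.sum_nonneg (fun t _ => sq_nonneg _)
    linarith
  · intro ℓ hpos hsum heq
    have h1 := key ℓ hpos hsum
    have hQ : ∑ t ∈ Finset.Icc 1 T, (ℓ t - ℓstar t) ^ 2 = 0 := by
      have h2 : 0 ≤ ∑ t ∈ Finset.Icc 1 T, (ℓ t - ℓstar t) ^ 2 :=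
        Finset.sum_nonneg (fun t _ => sq_nonneg _)
      linarith
    intro t ht1 ht2
    have := (Finset.sum_eq_zero_iff_of_nonneg
      (fun s _ => sq_nonneg (ℓ s - ℓstar s))).mp hQ t
      (Finset.mem_Icc.mpr ⟨ht1, ht2⟩)
    have : ℓ t - ℓstar t = 0 := by
      exact pow_eq_zero_iff (by norm_num) |>.mp this
    linarith
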